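/- Let τ be a permutation of a finite set Y. Then in the polynomial ring ℤ[t]: Σ over all τ-invariant subsets E ⊆ Y of sgn(τ|_E)·t^{|E|} equals Π over orbits O of τ on Y of (1 − (−t)^{|O|}), where sgn(τ|_E) is the sign of the permutation of E obtained by restricting τ. -/

import Mathlib

open Polynomial Equiv Equiv.Perm MulAction

set_option linter.unusedSectionVars false
set_option linter.unnecessarySimpa false
set_option maxHeartbeats 1000000

section Stmt4Aux

variable {Y : Type*} [Fintype Y] [DecidableEq Y] (τ : Equiv.Perm Y)

local notation "Qt" => MulAction.orbitRel.Quotient (Subgroup.zpowers τ) Y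

lemma stmt4_zpow_mem {E : Finset Y} (hE : ∀ x, x ∈ E ↔ τ x ∈ E) :
    ∀ k : ℤ, ∀ x ∈ E, (τ ^ k) x ∈ E := by
  have hinv : ∀ x ∈ E, τ⁻¹ x ∈ E := fun x hx => (hE (τ⁻¹ x)).mpr (by simpa using hx)
  intro k
  induction k using Int.induction_on with
  | zero => simpa using fun x hx => hx
  | succ k ih =>
      intro x hx
      have h1 : τ ^ ((k : ℤ) + 1) = τ * τ ^ (k : ℤ) := by
        rw [add_comm, zpow_add, zpow_one]
      rw [h1, Equiv.Perm.mul_apply]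
      exact (hE _).mp (ih x hx)
  | pred k ih =>
      intro x hx
      have h1 : τ ^ (-(k : ℤ) - 1) = τ⁻¹ * τ ^ (-(k : ℤ)) := by
        rw [sub_eq_add_neg, add_comm, zpow_add, zpow_neg_one]
      rw [h1, Equiv.Perm.mul_apply]
      exact hinv _ (ih x hx)

noncomputable def stmt4_orbFinset (O : Qt) : Finset Y := (Set.toFinite O.orbit).toFinset

lemma stmt4_mem_orbFinset {O : Qt} {x : Y} :
    x ∈ stmt4_orbFinset τ O ↔ (Quotient.mk'' x : Qt) = O := by
  simp [stmt4_orbFinset, Set.Finite.mem_toFinset, orbitRel.Quotient.mem_orbit]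

lemma stmt4_qmk_tau (x : Y) : (Quotient.mk'' (τ x) : Qt) = Quotient.mk'' x :=
  Quotient.sound' (by
    rw [MulAction.orbitRel_apply]
    exact ⟨⟨τ, Subgroup.mem_zpowers τ⟩, rfl⟩)

lemma stmt4_orbFinset_inv (O : Qt) :
    ∀ x, x ∈ stmt4_orbFinset τ O ↔ τ x ∈ stmt4_orbFinset τ O := by
  intro x
  rw [stmt4_mem_orbFinset, stmt4_mem_orbFinset, stmt4_qmk_tau]

lemma stmt4_card_orbFinset (O : Qt) : (stmt4_orbFinset τ O).card = Nat.card O.orbit := by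
  rw [Nat.card_coe_set_eq, Set.ncard_eq_toFinset_card _ (Set.toFinite _)]
  rfl

noncomputable def stmt4_unionOrb (S : Finset Qt) : Finset Y :=
  S.biUnion (fun O => stmt4_orbFinset τ O)

lemma stmt4_mem_unionOrb {S : Finset Qt} {x : Y} :
    x ∈ stmt4_unionOrb τ S ↔ (Quotient.mk'' x : Qt) ∈ S := by
  simp only [stmt4_unionOrb, Finset.mem_biUnion, stmt4_mem_orbFinset]
  constructor
  · rintro ⟨O, hO, rfl⟩; exact hO
  · intro h; exact ⟨_, h, rfl⟩

lemma stmt4_unionOrb_inv (S : Finset Qt) :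
    ∀ x, x ∈ stmt4_unionOrb τ S ↔ τ x ∈ stmt4_unionOrb τ S := by
  intro x
  rw [stmt4_mem_unionOrb, stmt4_mem_unionOrb, stmt4_qmk_tau]

noncomputable def stmt4_piF (E : Finset Y) (hE : ∀ x, x ∈ E ↔ τ x ∈ E) : Equiv.Perm Y :=
  Equiv.Perm.ofSubtype (τ.subtypePerm fun x => (hE x).symm)

lemma stmt4_sign_piF (E : Finset Y) (hE : ∀ x, x ∈ E ↔ τ x ∈ E) :
    Equiv.Perm.sign (stmt4_piF τ E hE) = Equiv.Perm.sign (τ.subtypePerm fun x => (hE x).symm) := by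
  rw [stmt4_piF, Equiv.Perm.sign_ofSubtype]

lemma stmt4_piF_apply_mem {E : Finset Y} {hE : ∀ x, x ∈ E ↔ τ x ∈ E} {x : Y}
    (hx : x ∈ E) : stmt4_piF τ E hE x = τ x := by
  rw [stmt4_piF, Equiv.Perm.ofSubtype_apply_of_mem _ hx]
  rfl

lemma stmt4_piF_apply_not_mem {E : Finset Y} {hE : ∀ x, x ∈ E ↔ τ x ∈ E} {x : Y}
    (hx : x ∉ E) : stmt4_piF τ E hE x = x :=
  Equiv.Perm.ofSubtype_apply_of_not_mem _ hx

lemma stmt4_piF_congr {E E' : Finset Y} {hE : ∀ x, x ∈ E ↔ τ x ∈ E}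
    {hE' : ∀ x, x ∈ E' ↔ τ x ∈ E'} (h : E = E') :
    stmt4_piF τ E hE = stmt4_piF τ E' hE' := by
  subst h; rfl

lemma stmt4_piF_zpow {E : Finset Y} {hE : ∀ x, x ∈ E ↔ τ x ∈ E} :
    ∀ k : ℤ, ∀ x ∈ E, (stmt4_piF τ E hE ^ k) x = (τ ^ k) x := by
  have hinv : ∀ x ∈ E, (stmt4_piF τ E hE)⁻¹ x = τ⁻¹ x := by
    intro x hx
    have h1 : τ⁻¹ x ∈ E := (hE (τ⁻¹ x)).mpr (by simpa using hx)
    have h2 : stmt4_piF τ E hE (τ⁻¹ x) = x := by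
      rw [stmt4_piF_apply_mem τ h1]; simp
    rw [Equiv.Perm.inv_eq_iff_eq]
    exact h2.symm
  intro k
  induction k using Int.induction_on with
  | zero => simp
  | succ k ih =>
      intro x hx
      have h1 : ∀ g : Equiv.Perm Y, g ^ ((k : ℤ) + 1) = g ^ (k : ℤ) * g := fun g => by
        rw [zpow_add, zpow_one]
      rw [h1, h1, Equiv.Perm.mul_apply, Equiv.Perm.mul_apply,
        stmt4_piF_apply_mem τ hx]
      exact ih _ ((hE x).mp hx)
  | pred k ih =>
      intro x hx
      have h1 : ∀ g : Equiv.Perm Y, g ^ (-(k : ℤ) - 1) = g ^ (-(k : ℤ)) * g⁻¹ := fun g => by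
        rw [sub_eq_add_neg, zpow_add, zpow_neg_one]
      have h2 : τ⁻¹ x ∈ E := (hE (τ⁻¹ x)).mpr (by simpa using hx)
      rw [h1, h1, Equiv.Perm.mul_apply, Equiv.Perm.mul_apply, hinv x hx]
      exact ih _ h2

lemma stmt4_piF_union {A B : Finset Y} (hA : ∀ x, x ∈ A ↔ τ x ∈ A)
    (hB : ∀ x, x ∈ B ↔ τ x ∈ B) (hAB : Disjoint A B)
    (hU : ∀ x, x ∈ A ∪ B ↔ τ x ∈ A ∪ B) :
    stmt4_piF τ (A ∪ B) hU = stmt4_piF τ A hA * stmt4_piF τ B hB := by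
  ext x
  by_cases hxA : x ∈ A
  · have hxB : x ∉ B := Finset.disjoint_left.mp hAB hxA
    rw [stmt4_piF_apply_mem τ (Finset.mem_union_left _ hxA), Equiv.Perm.mul_apply,
      stmt4_piF_apply_not_mem τ hxB, stmt4_piF_apply_mem τ hxA]
  · by_cases hxB : x ∈ B
    · have h1 : τ x ∈ B := (hB x).mp hxB
      have h2 : τ x ∉ A := fun h => Finset.disjoint_left.mp hAB h h1
      rw [stmt4_piF_apply_mem τ (Finset.mem_union_right _ hxB), Equiv.Perm.mul_apply,
        stmt4_piF_apply_mem τ hxB, stmt4_piF_apply_not_mem τ h2]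
    · have h0 : x ∉ A ∪ B := by simp [hxA, hxB]
      rw [stmt4_piF_apply_not_mem τ h0, Equiv.Perm.mul_apply,
        stmt4_piF_apply_not_mem τ hxB, stmt4_piF_apply_not_mem τ hxA]

lemma stmt4_fixed_card_one {x : Y} (hx : τ x = x) :
    Nat.card (MulAction.orbit (Subgroup.zpowers τ) x) = 1 := by
  classical
  have hfix : x ∈ MulAction.fixedPoints (Subgroup.zpowers τ) Y := by
    intro g
    obtain ⟨k, hk⟩ := Subgroup.mem_zpowers_iff.mp g.2
    show (g : Equiv.Perm Y) x = x
    rw [← hk]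
    exact (Function.IsFixedPt.perm_zpow hx k : _)
  haveI : Fintype (MulAction.orbit (Subgroup.zpowers τ) x) := Fintype.ofFinite _
  rw [Nat.card_eq_fintype_card]
  exact MulAction.mem_fixedPoints_iff_card_orbit_eq_one.mp hfix

lemma stmt4_sign_piF_orbit (O : Qt) :
    ((Equiv.Perm.sign (stmt4_piF τ (stmt4_orbFinset τ O) (stmt4_orbFinset_inv τ O))) : ℤ)
      = (-1) ^ (Nat.card O.orbit - 1) := by
  classical
  obtain ⟨b, hbO⟩ : ∃ b : Y, (Quotient.mk'' b : Qt) = O := ⟨Quotient.out O, Quotient.out_eq' O⟩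
  have hbA : b ∈ stmt4_orbFinset τ O := (stmt4_mem_orbFinset τ).mpr hbO
  have hcard : (stmt4_orbFinset τ O).card = Nat.card O.orbit := stmt4_card_orbFinset τ O
  have hn1 : 1 ≤ Nat.card O.orbit := by
    rw [← hcard]; exact Finset.card_pos.mpr ⟨b, hbA⟩
  have hfix1 : ∀ x ∈ stmt4_orbFinset τ O, τ x = x → Nat.card O.orbit = 1 := by
    intro x hxA hx
    have hxO : (Quotient.mk'' x : Qt) = O := (stmt4_mem_orbFinset τ).mp hxA
    have horb : O.orbit = MulAction.orbit (Subgroup.zpowers τ) x := by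
      rw [← hxO]; rfl
    rw [horb]
    exact stmt4_fixed_card_one τ hx
  rcases eq_or_lt_of_le hn1 with h1 | h2
  · -- card = 1
    have hcard1 : (stmt4_orbFinset τ O).card = 1 := by rw [hcard, ← h1]
    obtain ⟨a, ha⟩ := Finset.card_eq_one.mp hcard1
    have haA : a ∈ stmt4_orbFinset τ O := by rw [ha]; exact Finset.mem_singleton_self a
    have hτa : τ a = a := by
      have := (stmt4_orbFinset_inv τ O a).mp haA
      rw [ha, Finset.mem_singleton] at this
      exact this
    have hpi : stmt4_piF τ (stmt4_orbFinset τ O) (stmt4_orbFinset_inv τ O) = 1 := by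
      ext x
      by_cases hx : x ∈ stmt4_orbFinset τ O
      · have hxa : x = a := by rwa [ha, Finset.mem_singleton] at hx
        subst hxa
        rw [stmt4_piF_apply_mem τ hx, hτa]
        rfl
      · rw [stmt4_piF_apply_not_mem τ hx]; rfl
    rw [hpi, map_one, ← h1]
    simp
  · -- card ≥ 2
    have hsupp : (stmt4_piF τ (stmt4_orbFinset τ O) (stmt4_orbFinset_inv τ O)).support
        = stmt4_orbFinset τ O := by
      ext x
      rw [Equiv.Perm.mem_support]
      constructor
      · intro h
        by_contra hx
        exact h (stmt4_piF_apply_not_mem τ hx)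
      · intro hx
        rw [stmt4_piF_apply_mem τ hx]
        intro hτx
        have := hfix1 x hx hτx
        omega
    have hA_same : ∀ x ∈ stmt4_orbFinset τ O, ∀ y ∈ stmt4_orbFinset τ O,
        ∃ k : ℤ, (τ ^ k) y = x := by
      intro x hx y hy
      have h1 : (Quotient.mk'' x : Qt) = Quotient.mk'' y := by
        rw [(stmt4_mem_orbFinset τ).mp hx, (stmt4_mem_orbFinset τ).mp hy]
      have h2 := Quotient.exact' h1
      rw [MulAction.orbitRel_apply] at h2
      obtain ⟨g, hg⟩ := h2
      obtain ⟨k, hk⟩ := Subgroup.mem_zpowers_iff.mp g.2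
      exact ⟨k, by rw [hk]; exact hg⟩
    have hcycle : (stmt4_piF τ (stmt4_orbFinset τ O) (stmt4_orbFinset_inv τ O)).IsCycle := by
      refine ⟨b, ?_, ?_⟩
      · have : b ∈ (stmt4_piF τ (stmt4_orbFinset τ O) (stmt4_orbFinset_inv τ O)).support := by
          rw [hsupp]; exact hbA
        exact Equiv.Perm.mem_support.mp this
      · intro y hy
        have hyA : y ∈ stmt4_orbFinset τ O := by
          rw [← hsupp]; exact Equiv.Perm.mem_support.mpr hy
        obtain ⟨k, hk⟩ := hA_same y hyA b hbA
        exact ⟨k, by rw [stmt4_piF_zpow τ k b hbA]; exact hk⟩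
    have hsign := hcycle.sign
    rw [hsupp, hcard] at hsign
    rw [hsign]
    obtain ⟨m, hm⟩ : ∃ m, Nat.card O.orbit = m + 1 := ⟨Nat.card O.orbit - 1, by omega⟩
    rw [hm]
    push_cast
    simp [pow_succ]

lemma stmt4_disj_orb_union [DecidableEq Qt] {O : Qt} {S : Finset Qt} (hO : O ∉ S) :
    Disjoint (stmt4_orbFinset τ O) (stmt4_unionOrb τ S) := by
  rw [Finset.disjoint_left]
  intro x hx hx'
  rw [stmt4_mem_orbFinset] at hx
  rw [stmt4_mem_unionOrb] at hx'
  rw [hx] at hx'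
  exact hO hx'

lemma stmt4_card_unionOrb [DecidableEq Qt] (S : Finset Qt) :
    (stmt4_unionOrb τ S).card = ∑ O ∈ S, Nat.card O.orbit := by
  rw [stmt4_unionOrb, Finset.card_biUnion]
  · exact Finset.sum_congr rfl fun O _ => stmt4_card_orbFinset τ O
  · intro O₁ h₁ O₂ h₂ hne
    show Disjoint (stmt4_orbFinset τ O₁) (stmt4_orbFinset τ O₂)
    rw [Finset.disjoint_left]
    intro x hx hx'
    rw [stmt4_mem_orbFinset] at hx hx'
    exact hne (hx ▸ hx')

lemma stmt4_sign_unionOrb [DecidableEq Qt] (S : Finset Qt) :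
    ((Equiv.Perm.sign (stmt4_piF τ (stmt4_unionOrb τ S) (stmt4_unionOrb_inv τ S))) : ℤ)
      = ∏ O ∈ S, (-1) ^ (Nat.card O.orbit - 1) := by
  classical
  induction S using Finset.induction_on with
  | empty =>
      have hpi : stmt4_piF τ (stmt4_unionOrb τ ∅) (stmt4_unionOrb_inv τ ∅) = 1 := by
        ext x
        rw [stmt4_piF_apply_not_mem τ (by simp [stmt4_mem_unionOrb])]
        rfl
      rw [hpi, map_one]
      simp
  | @insert O S hO ih =>
      have hEq : stmt4_unionOrb τ (insert O S) = stmt4_orbFinset τ O ∪ stmt4_unionOrb τ S :=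
        Finset.biUnion_insert
      have hU' : ∀ x, x ∈ stmt4_orbFinset τ O ∪ stmt4_unionOrb τ S ↔
          τ x ∈ stmt4_orbFinset τ O ∪ stmt4_unionOrb τ S := by
        intro x
        rw [← hEq]
        exact stmt4_unionOrb_inv τ (insert O S) x
      rw [stmt4_piF_congr τ hEq (hE' := hU'),
        stmt4_piF_union τ (stmt4_orbFinset_inv τ O) (stmt4_unionOrb_inv τ S)
          (stmt4_disj_orb_union τ hO) hU', map_mul]
      push_cast
      rw [stmt4_sign_piF_orbit τ O, ih, Finset.prod_insert hO]

lemma stmt4_factor (n : ℕ) (hn : 1 ≤ n) :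
    (1 : ℤ[X]) - (-(X : ℤ[X])) ^ n = C ((-1) ^ (n - 1)) * X ^ n + 1 := by
  obtain ⟨m, rfl⟩ : ∃ m, n = m + 1 := ⟨n - 1, by omega⟩
  simp only [Nat.add_sub_cancel, map_pow, map_neg, map_one, neg_pow (X : ℤ[X]), pow_succ]
  ring

end Stmt4Aux

/-- For a permutation `τ` of a finite set `Y`, in `ℤ[t]`, the sum over all
`τ`-invariant subsets `E ⊆ Y` of `sgn(τ|_E) · t^|E|` equals the product over the orbits `O`
of `τ` on `Y` of `(1 - (-t)^|O|)`. -/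
theorem stmt_4 {Y : Type*} [Fintype Y] [DecidableEq Y] (τ : Equiv.Perm Y) :
    ∑ E : {E : Finset Y // ∀ x, x ∈ E ↔ τ x ∈ E},
      (Equiv.Perm.sign (τ.subtypePerm fun x => (E.2 x).symm) : ℤ) • (X : ℤ[X]) ^ (E : Finset Y).card =
    ∏ᶠ O : MulAction.orbitRel.Quotient (Subgroup.zpowers τ) Y,
      (1 - (-(X : ℤ[X])) ^ Nat.card O.orbit) := by
  classical
  haveI : Fintype (MulAction.orbitRel.Quotient (Subgroup.zpowers τ) Y) := Fintype.ofFinite _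
  -- the bijection between subsets of the orbit set and invariant subsets of `Y`
  let e : Finset (MulAction.orbitRel.Quotient (Subgroup.zpowers τ) Y) ≃
      {E : Finset Y // ∀ x, x ∈ E ↔ τ x ∈ E} :=
  { toFun := fun S => ⟨stmt4_unionOrb τ S, stmt4_unionOrb_inv τ S⟩
    invFun := fun E => E.1.image
      (fun x => (Quotient.mk'' x : MulAction.orbitRel.Quotient (Subgroup.zpowers τ) Y))
    left_inv := by
      intro S
      ext O
      simp only [Finset.mem_image]
      constructor
      · rintro ⟨x, hx, rfl⟩
        exact (stmt4_mem_unionOrb τ).mp hx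
      · intro hO
        exact ⟨Quotient.out O,
          (stmt4_mem_unionOrb τ).mpr (by rw [Quotient.out_eq']; exact hO),
          Quotient.out_eq' O⟩
    right_inv := by
      intro E
      apply Subtype.ext
      ext x
      rw [stmt4_mem_unionOrb]
      simp only [Finset.mem_image]
      constructor
      · rintro ⟨y, hy, hxy⟩
        have h2 := Quotient.exact' hxy
        rw [MulAction.orbitRel_apply] at h2
        obtain ⟨g, hg⟩ := h2
        obtain ⟨k, hk⟩ := Subgroup.mem_zpowers_iff.mp g.2
        have hky : (τ ^ k) x = y := by rw [hk]; exact hg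
        have hmem : (τ ^ (-k)) y ∈ E.1 := stmt4_zpow_mem τ E.2 (-k) y hy
        have hx : (τ ^ (-k)) y = x := by
          rw [← hky, ← Equiv.Perm.mul_apply, ← zpow_add]
          simp
        rwa [hx] at hmem
      · intro hx
        exact ⟨x, hx, rfl⟩ }
  -- reindex the left-hand side
  rw [← Fintype.sum_equiv e
      (fun S => C (∏ O ∈ S, (-1 : ℤ) ^ (Nat.card O.orbit - 1)) *
        X ^ (∑ O ∈ S, Nat.card O.orbit))
      (fun E => (Equiv.Perm.sign (τ.subtypePerm fun x => (E.2 x).symm) : ℤ) • (X : ℤ[X]) ^ (E : Finset Y).card)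
      (fun S => by
        simp only [e, Equiv.coe_fn_mk]
        rw [smul_eq_C_mul, ← stmt4_sign_piF τ _ (stmt4_unionOrb_inv τ S),
          stmt4_sign_unionOrb τ S, stmt4_card_unionOrb τ S])]
  -- compute the right-hand side
  rw [finprod_eq_prod_of_fintype]
  have hpos : ∀ O : MulAction.orbitRel.Quotient (Subgroup.zpowers τ) Y,
      1 ≤ Nat.card O.orbit := by
    intro O
    haveI : Nonempty O.orbit :=
      ⟨⟨Quotient.out O, MulAction.orbitRel.Quotient.mem_orbit.mpr (Quotient.out_eq' O)⟩⟩
    exact Nat.one_le_iff_ne_zero.mpr Nat.card_pos.ne'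
  rw [Finset.prod_congr rfl (fun O _ => stmt4_factor (Nat.card O.orbit) (hpos O)),
    Finset.prod_add, Finset.powerset_univ]
  refine Finset.sum_congr rfl fun S _ => ?_
  rw [Finset.prod_const_one, mul_one, Finset.prod_mul_distrib, map_prod,
    Finset.prod_pow_eq_pow_sum]
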